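/- Let E be the elliptic curve y^2 + y = 3x^3 - 1 over ℚ(ω), where ω is a primitive cube root of unity. The nine points ∞, (0, ω), (0, ω^2), (ω^i, 1), (ω^i, -2) for i = 0, 1, 2 are exactly the 3-torsion points of E, forming a group isomorphic to (ℤ/3ℤ)^2. -/

import Mathlib

open WeierstrassCurve.Affine WeierstrassCurve.Affine.Point

namespace Stmt11Aux

open Classical

variable {K : Type} [Field K] [CharZero K]

noncomputable abbrev Wc (K : Type) [Field K] : WeierstrassCurve.Affine K :=
  (⟨0, 0, 3, 0, -9⟩ : WeierstrassCurve K).toAffine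

omit [CharZero K] in
lemma some_eq_some {W : WeierstrassCurve.Affine K} {x₁ y₁ x₂ y₂ : K} (h₁ : W.Nonsingular x₁ y₁)
    (h₂ : W.Nonsingular x₂ y₂) (hx : x₁ = x₂) (hy : y₁ = y₂) : some _ _ h₁ = some _ _ h₂ := by
  subst hx; subst hy; rfl

omit [CharZero K] in
lemma ns {x y : K} (he : y ^ 2 + 3 * y = x ^ 3 - 9) (h2 : (2 : K) * y + 3 ≠ 0) :
    (Wc K).Nonsingular x y := by
  rw [nonsingular_iff]
  constructor
  · rw [equation_iff]; show y ^ 2 + 0 * x * y + 3 * y = _; linear_combination he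
  · right
    show y ≠ -y - 0 * x - 3
    intro hc; apply h2; linear_combination hc

lemma key {x y : K} (h : (Wc K).Nonsingular x y) :
    3 • (some _ _ h : (Wc K).Point) = 0 ↔ x * (x ^ 3 - 27) = 0 := by
  have heq : y ^ 2 + 3 * y = x ^ 3 - 9 := by
    have := h.1
    rw [equation_iff] at this
    linear_combination this
  have hneg : (Wc K).negY x y = -y - 3 := by show -y - 0 * x - 3 = _; ring
  by_cases hy : y = (Wc K).negY x y
  · have h2 : (some _ _ h : (Wc K).Point) + some _ _ h = 0 := add_self_of_Y_eq hy
    have h3 : 3 • (some _ _ h : (Wc K).Point) = some _ _ h := by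
      rw [show (3 : ℕ) = 2 + 1 from rfl, add_smul, two_smul, h2, zero_add, one_smul]
    rw [h3]
    have hy' : y = -3 / 2 := by rw [hneg] at hy; linear_combination hy / 2
    refine iff_of_false (some_ne_zero h) ?_
    have hx3 : x ^ 3 = 27 / 4 := by rw [hy'] at heq; linear_combination -heq
    intro hc
    rcases mul_eq_zero.mp hc with hc | hc
    · rw [hc] at hx3; norm_num at hx3
    · rw [hx3] at hc; norm_num at hc
  · have hne : (2 : K) * y + 3 ≠ 0 := by
      intro hc; apply hy; rw [hneg]; linear_combination hc
    have hsq : (2 * y + 3) ^ 2 = 4 * x ^ 3 - 27 := by linear_combination 4 * heq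
    have hLval : (Wc K).slope x x y y = 3 * x ^ 2 / (2 * y + 3) := by
      rw [slope_of_Y_ne rfl hy, hneg]
      show (3 * x ^ 2 + 2 * 0 * x + 0 - 0 * y) / _ = _
      ring_nf
    have h2 : (some _ _ h : (Wc K).Point) + some _ _ h = some _ _ (nonsingular_add h h fun hxy => hy hxy.right) :=
      add_self_of_Y_ne hy
    have h3 : 3 • (some _ _ h : (Wc K).Point) = (some _ _ h + some _ _ h) + some _ _ h := by
      rw [show (3 : ℕ) = 2 + 1 from rfl, add_smul, two_smul, one_smul]
    have hXiff : (Wc K).addX x x ((Wc K).slope x x y y) = x ↔ x * (x ^ 3 - 27) = 0 := by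
      rw [show (Wc K).addX x x ((Wc K).slope x x y y)
            = ((Wc K).slope x x y y) ^ 2 - 2 * x by show _ + 0 * _ - 0 - x - x = _; ring, hLval]
      rw [div_pow, sub_eq_iff_eq_add, div_eq_iff (pow_ne_zero 2 hne)]
      constructor
      · intro hXX
        linear_combination (-1/3 : K) * hXX - x * hsq
      · intro h0
        linear_combination (-3 : K) * h0 - 3 * x * hsq
    rw [h3, h2, add_eq_zero_iff_eq_neg, neg_some, some.injEq]
    constructor
    · rintro ⟨h1, -⟩
      exact hXiff.mp h1
    · intro h0
      have h1 := hXiff.mpr h0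
      refine ⟨h1, ?_⟩
      rw [WeierstrassCurve.Affine.addY, WeierstrassCurve.Affine.negAddY, h1]
      show -(_ * (x - x) + y) - 0 * x - 3 = -y - 0 * x - 3
      ring

end Stmt11Aux
set_option maxHeartbeats 1600000 in
open Classical in
/-- Over `K = ℚ(ω)`, the nine points `∞, (0,ω), (0,ω²), (ωⁱ,1), (ωⁱ,-2)` (for
`i = 0,1,2`) are exactly the `3`-torsion of the elliptic curve `y² + y = 3x³ - 1`,
a group isomorphic to `(ℤ/3ℤ)²`.  We take `K` to be the cyclotomic field `ℚ(ζ₃)`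
and use the isomorphic Weierstrass model `Y² + 3Y = X³ - 9` obtained by the scaling
`(X, Y) = (3x, 3y)`, under which the listed affine points become
`(0, 3ω), (0, 3ω²), (3ωⁱ, 3), (3ωⁱ, -6)`. -/
theorem stmt11 (K : Type) [Field K] [Algebra ℚ K] (hK : Nonempty (K ≃ₐ[ℚ] CyclotomicField 3 ℚ))
    (ω : K) (hω : IsPrimitiveRoot ω 3)
    (W : WeierstrassCurve K) (hW : W = ⟨0, 0, 3, 0, -9⟩) :
    (∀ P : W.toAffine.Point, 3 • P = 0 ↔
      (P = 0 ∨ ∃ (x y : K) (h : W.toAffine.Nonsingular x y),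
        P = WeierstrassCurve.Affine.Point.some x y h ∧
        ((x = 0 ∧ (y = 3 * ω ∨ y = 3 * ω ^ 2)) ∨
          (∃ i : Fin 3, x = 3 * ω ^ (i : ℕ) ∧ (y = 3 ∨ y = -6))))) ∧
    Nonempty ({P : W.toAffine.Point // 3 • P = 0} ≃ (ZMod 3 × ZMod 3)) := by
  haveI : CharZero K := charZero_of_injective_algebraMap (algebraMap ℚ K).injective
  clear hK
  subst hW
  open WeierstrassCurve.Affine WeierstrassCurve.Affine.Point Stmt11Aux in
  -- ω facts
  have hω3 : ω ^ 3 = 1 := hω.pow_eq_one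
  have hω0 : ω ≠ 0 := fun h => by rw [h] at hω3; norm_num at hω3
  have hω1 : ω ≠ 1 := hω.ne_one (by norm_num)
  have hω21 : ω ^ 2 ≠ 1 := hω.pow_ne_one_of_pos_of_lt (by norm_num) (by norm_num)
  have hsum : ω ^ 2 + ω + 1 = 0 := by
    have h' : (ω - 1) * (ω ^ 2 + ω + 1) = 0 := by linear_combination hω3
    rcases mul_eq_zero.mp h' with h | h
    · exact absurd (by linear_combination h) hω1
    · exact h
  have hωω2 : ω ≠ ω ^ 2 := by
    intro h
    exact hω1 (mul_left_cancel₀ hω0 (show ω * 1 = ω * ω by linear_combination h)).symm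
  -- denominators nonzero
  have hd1 : (2 : K) * (3 * ω) + 3 ≠ 0 := by
    intro hc
    have h1 : ω = -(1/2) := by linear_combination hc / 6
    rw [h1] at hsum; norm_num at hsum
  have hd2 : (2 : K) * (3 * ω ^ 2) + 3 ≠ 0 := by
    intro hc
    have h1 : ω = -(1/2) := by linear_combination hsum - hc / 6
    rw [h1] at hc; norm_num at hc
  -- nonsingularity of the eight affine points
  have hns1 : (Wc K).Nonsingular 0 (3 * ω) := ns (by linear_combination 9 * hsum) hd1
  have hns2 : (Wc K).Nonsingular 0 (3 * ω ^ 2) :=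
    ns (by linear_combination 9 * ω * hω3 + 9 * hsum) hd2
  have hns3 : (Wc K).Nonsingular 3 3 := ns (by norm_num) (by norm_num)
  have hns4 : (Wc K).Nonsingular (3 * ω) 3 := ns (by linear_combination -27 * hω3) (by norm_num)
  have hns5 : (Wc K).Nonsingular (3 * ω ^ 2) 3 :=
    ns (by linear_combination (-27 * (ω ^ 3 + 1)) * hω3) (by norm_num)
  have hns6 : (Wc K).Nonsingular 3 (-6) := ns (by norm_num) (by norm_num)
  have hns7 : (Wc K).Nonsingular (3 * ω) (-6) :=
    ns (by linear_combination -27 * hω3) (by norm_num)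
  have hns8 : (Wc K).Nonsingular (3 * ω ^ 2) (-6) :=
    ns (by linear_combination (-27 * (ω ^ 3 + 1)) * hω3) (by norm_num)
  -- torsion proofs
  have t1 : 3 • (some _ _ hns1 : (Wc K).Point) = 0 := (key hns1).mpr (by ring)
  have t2 : 3 • (some _ _ hns2 : (Wc K).Point) = 0 := (key hns2).mpr (by ring)
  have t3 : 3 • (some _ _ hns3 : (Wc K).Point) = 0 := (key hns3).mpr (by norm_num)
  have t4 : 3 • (some _ _ hns4 : (Wc K).Point) = 0 := (key hns4).mpr
    (by linear_combination 81 * ω * hω3)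
  have t5 : 3 • (some _ _ hns5 : (Wc K).Point) = 0 := (key hns5).mpr
    (by linear_combination 81 * ω ^ 2 * (ω ^ 3 + 1) * hω3)
  have t6 : 3 • (some _ _ hns6 : (Wc K).Point) = 0 := (key hns6).mpr (by norm_num)
  have t7 : 3 • (some _ _ hns7 : (Wc K).Point) = 0 := (key hns7).mpr
    (by linear_combination 81 * ω * hω3)
  have t8 : 3 • (some _ _ hns8 : (Wc K).Point) = 0 := (key hns8).mpr
    (by linear_combination 81 * ω ^ 2 * (ω ^ 3 + 1) * hω3)
  -- part 1
  have part1 : ∀ P : (Wc K).Point, 3 • P = 0 ↔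
      (P = 0 ∨ ∃ (x y : K) (h : (Wc K).Nonsingular x y),
        P = some _ _ h ∧
        ((x = 0 ∧ (y = 3 * ω ∨ y = 3 * ω ^ 2)) ∨
          (∃ i : Fin 3, x = 3 * ω ^ (i : ℕ) ∧ (y = 3 ∨ y = -6)))) := by
    intro P
    rcases P with _ | @⟨x, y, h⟩
    · exact iff_of_true (smul_zero 3) (Or.inl rfl)
    · rw [key h]
      constructor
      · intro h0
        right
        refine ⟨x, y, h, rfl, ?_⟩
        have heq : y ^ 2 + 3 * y = x ^ 3 - 9 := by
          have := h.1; rw [equation_iff] at this; linear_combination this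
        rcases mul_eq_zero.mp h0 with hx | hx
        · left
          refine ⟨hx, ?_⟩
          subst hx
          have hf : (y - 3 * ω) * (y - 3 * ω ^ 2) = 0 := by
            linear_combination heq - 3 * y * hsum + 9 * hω3
          rcases mul_eq_zero.mp hf with h' | h'
          · exact Or.inl (by linear_combination h')
          · exact Or.inr (by linear_combination h')
        · right
          have hx27 : x ^ 3 = 27 := by linear_combination hx
          have hyor : y = 3 ∨ y = -6 := by
            have hy' : (y - 3) * (y + 6) = 0 := by linear_combination heq + hx27
            rcases mul_eq_zero.mp hy' with h' | h'
            · exact Or.inl (by linear_combination h')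
            · exact Or.inr (by linear_combination h')
          have hfac : (x - 3) * ((x - 3 * ω) * (x - 3 * ω ^ 2)) = 0 := by
            linear_combination hx + (-3 * x ^ 2 + 9 * x) * hsum + (9 * x - 27) * hω3
          rcases mul_eq_zero.mp hfac with h' | h'
          · refine ⟨0, ?_, hyor⟩
            rw [show ((0 : Fin 3) : ℕ) = 0 from rfl, pow_zero, mul_one]
            linear_combination h'
          · rcases mul_eq_zero.mp h' with h'' | h''
            · refine ⟨1, ?_, hyor⟩
              rw [show ((1 : Fin 3) : ℕ) = 1 from rfl, pow_one]
              linear_combination h''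
            · refine ⟨2, ?_, hyor⟩
              rw [show ((2 : Fin 3) : ℕ) = 2 from rfl]
              linear_combination h''
      · rintro (h0 | ⟨x', y', h', hP, hcase⟩)
        · exact absurd h0 (some_ne_zero h)
        · have hxx : x = x' := (some.inj hP).1
          rcases hcase with ⟨hx0, -⟩ | ⟨i, hxi, -⟩
          · rw [hxx, hx0]; ring
          · rw [hxx, hxi]
            fin_cases i
            · rw [show ((⟨0, by norm_num⟩ : Fin 3) : ℕ) = 0 from rfl, pow_zero]; norm_num
            · rw [show ((⟨1, by norm_num⟩ : Fin 3) : ℕ) = 1 from rfl, pow_one]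
              linear_combination 81 * ω * hω3
            · rw [show ((⟨2, by norm_num⟩ : Fin 3) : ℕ) = 2 from rfl]
              linear_combination 81 * ω ^ 2 * (ω ^ 3 + 1) * hω3
  refine ⟨part1, ?_⟩
  -- the nine torsion points
  have tz : 3 • (0 : (Wc K).Point) = 0 := smul_zero 3
  let f : Fin 9 → {P : (Wc K).Point // 3 • P = 0} :=
    ![⟨0, tz⟩, ⟨some _ _ hns1, t1⟩, ⟨some _ _ hns2, t2⟩, ⟨some _ _ hns3, t3⟩, ⟨some _ _ hns4, t4⟩,
      ⟨some _ _ hns5, t5⟩, ⟨some _ _ hns6, t6⟩, ⟨some _ _ hns7, t7⟩, ⟨some _ _ hns8, t8⟩]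
  -- inequalities between coordinates
  have n03 : (0 : K) ≠ 3 := by norm_num
  have n0ω : (0 : K) ≠ 3 * ω := fun h => hω0 (by linear_combination -h / 3)
  have n0ω2 : (0 : K) ≠ 3 * ω ^ 2 := fun h => hω0 (pow_eq_zero_iff (n := 2) (by norm_num) |>.mp
    (by linear_combination -h / 3))
  have n3ω : (3 : K) ≠ 3 * ω := fun h => hω1 (by linear_combination -h / 3)
  have n3ω2 : (3 : K) ≠ 3 * ω ^ 2 := fun h => hω21 (by linear_combination -h / 3)
  have nωω2 : 3 * ω ≠ 3 * ω ^ 2 := fun h => hωω2 (by linear_combination h / 3)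
  have ny : (3 : K) ≠ -6 := by norm_num
  have hinj : Function.Injective f := by
    intro a b hab
    have hab' := congrArg Subtype.val hab
    clear hab
    fin_cases a <;> fin_cases b <;>
      first
        | rfl
        | exact absurd hab' (some_ne_zero _).symm
        | exact absurd hab' (some_ne_zero _)
        | (exfalso
           obtain ⟨h1, h2⟩ := some.inj hab'
           first
             | exact n03 h1 | exact n03 h1.symm | exact n0ω h1 | exact n0ω h1.symm
             | exact n0ω2 h1 | exact n0ω2 h1.symm | exact n3ω h1 | exact n3ω h1.symm
             | exact n3ω2 h1 | exact n3ω2 h1.symm | exact nωω2 h1 | exact nωω2 h1.symm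
             | exact ny h2 | exact ny h2.symm | exact nωω2 h2 | exact nωω2 h2.symm)
  have hsurj : Function.Surjective f := by
    rintro ⟨P, hP⟩
    rcases (part1 P).mp hP with rfl | ⟨x, y, h, rfl, hcase⟩
    · exact ⟨0, rfl⟩
    · rcases hcase with ⟨hx, hy | hy⟩ | ⟨i, hxi, hy | hy⟩
      · exact ⟨1, Subtype.ext (some_eq_some hns1 h hx.symm hy.symm)⟩
      · exact ⟨2, Subtype.ext (some_eq_some hns2 h hx.symm hy.symm)⟩
      · fin_cases i
        · exact ⟨3, Subtype.ext (some_eq_some hns3 h (by rw [hxi]; norm_num) hy.symm)⟩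
        · exact ⟨4, Subtype.ext (some_eq_some hns4 h (by rw [hxi, pow_one]) hy.symm)⟩
        · exact ⟨5, Subtype.ext (some_eq_some hns5 h (by rw [hxi]) hy.symm)⟩
      · fin_cases i
        · exact ⟨6, Subtype.ext (some_eq_some hns6 h (by rw [hxi]; norm_num) hy.symm)⟩
        · exact ⟨7, Subtype.ext (some_eq_some hns7 h (by rw [hxi, pow_one]) hy.symm)⟩
        · exact ⟨8, Subtype.ext (some_eq_some hns8 h (by rw [hxi]) hy.symm)⟩
  exact ⟨((Equiv.ofBijective f ⟨hinj, hsurj⟩).symm).trans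
    (Fintype.equivOfCardEq (by simp))⟩
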